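/- Let ⌊·⌋ : ℝ → ℤ denote the floor function. Then for all m ∈ [1,∞) it holds that max_{n ∈ ℕ₀} m^{n/2}/n! ≤ m^{⌊m^{1/2}⌋/2}/(⌊m^{1/2}⌋!) < exp(m^{1/2})/(⌊m^{1/2}⌋)^{1/2} ≤ exp(m^{1/2}). -/

import Mathlib

open Real

lemma stirling_lb (n : ℕ) :
    Real.sqrt π * (Real.sqrt (2*n) * ((n:ℝ)/Real.exp 1)^n) ≤ n.factorial := by
  rcases n with _ | j
  · simp [Nat.factorial]
  · have h1 : Real.sqrt π ≤ Stirling.stirlingSeq (j+1) :=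
      Stirling.stirlingSeq'_antitone.le_of_tendsto
        (Stirling.tendsto_stirlingSeq_sqrt_pi.comp (Filter.tendsto_add_atTop_nat 1)) j
    have hpos : 0 < Real.sqrt (2*((j+1:ℕ):ℝ)) * (((j+1:ℕ):ℝ)/Real.exp 1)^(j+1) := by
      positivity
    rw [Stirling.stirlingSeq, le_div_iff₀ hpos] at h1
    exact h1

lemma step_up (s : ℝ) (hs : 0 ≤ s) (i : ℕ) (h : (i:ℝ) + 1 ≤ s) :
    s^i / i.factorial ≤ s^(i+1) / (i+1).factorial := by
  have hf : (0:ℝ) < i.factorial := by exact_mod_cast i.factorial_pos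
  rw [div_le_div_iff₀ hf (by exact_mod_cast (i+1).factorial_pos)]
  have hp : (0:ℝ) ≤ s^i := pow_nonneg hs i
  push_cast [Nat.factorial_succ, pow_succ]
  nlinarith [mul_le_mul_of_nonneg_right h (mul_nonneg hp hf.le)]

lemma step_down (s : ℝ) (hs : 0 ≤ s) (i : ℕ) (h : s ≤ (i:ℝ) + 1) :
    s^(i+1) / (i+1).factorial ≤ s^i / i.factorial := by
  have hf : (0:ℝ) < i.factorial := by exact_mod_cast i.factorial_pos
  rw [div_le_div_iff₀ (by exact_mod_cast (i+1).factorial_pos) hf]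
  have hp : (0:ℝ) ≤ s^i := pow_nonneg hs i
  push_cast [Nat.factorial_succ, pow_succ]
  nlinarith [mul_le_mul_of_nonneg_right h (mul_nonneg hp hf.le)]

lemma pow_div_factorial_le (s : ℝ) (hs : 0 ≤ s) (n : ℕ) :
    s^n / n.factorial ≤ s^(⌊s⌋₊) / (⌊s⌋₊).factorial := by
  set k := ⌊s⌋₊ with hk
  rcases le_or_gt n k with h | h
  · -- n ≤ k
    have up : ∀ j, s^(k-j) / (k-j).factorial ≤ s^k / k.factorial := by
      intro j
      induction j with
      | zero => simp
      | succ j ih =>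
        rcases le_or_gt k j with hkj | hkj
        · have : k - (j+1) = k - j := by omega
          rw [this]; exact ih
        · have heq : k - (j+1) + 1 = k - j := by omega
          refine le_trans ?_ ih
          have := step_up s hs (k - (j+1)) ?_
          · rwa [heq] at this
          · have h1 : (k - (j+1)) + 1 ≤ k := by omega
            have h2 : (k:ℝ) ≤ s := Nat.floor_le hs
            have : ((k - (j+1) + 1 : ℕ):ℝ) ≤ (k:ℝ) := by exact_mod_cast h1
            push_cast at this ⊢
            linarith
    have := up (k - n)
    rwa [show k - (k - n) = n by omega] at this
  · -- n > k
    have down : ∀ j, s^(k+j) / (k+j).factorial ≤ s^k / k.factorial := by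
      intro j
      induction j with
      | zero => simp
      | succ j ih =>
        refine le_trans ?_ ih
        have hd := step_down s hs (k + j) ?_
        · exact hd
        · have h2 : s < (k:ℝ) + 1 := Nat.lt_floor_add_one s
          push_cast
          linarith
    have := down (n - k)
    rwa [show k + (n - k) = n by omega] at this

theorem max_rpow_div_factorial (m : ℝ) (hm : 1 ≤ m) :
    (∀ n : ℕ, m ^ ((n : ℝ) / 2) / (n.factorial : ℝ)
        ≤ m ^ ((⌊Real.sqrt m⌋₊ : ℝ) / 2) / ((⌊Real.sqrt m⌋₊).factorial : ℝ)) ∧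
    m ^ ((⌊Real.sqrt m⌋₊ : ℝ) / 2) / ((⌊Real.sqrt m⌋₊).factorial : ℝ)
      < Real.exp (Real.sqrt m) / Real.sqrt (⌊Real.sqrt m⌋₊ : ℝ) ∧
    Real.exp (Real.sqrt m) / Real.sqrt (⌊Real.sqrt m⌋₊ : ℝ) ≤ Real.exp (Real.sqrt m) := by
  have hm0 : (0:ℝ) ≤ m := by linarith
  set s := Real.sqrt m with hsdef
  have hs1 : 1 ≤ s := by
    rw [hsdef, show (1:ℝ) = Real.sqrt 1 by simp]
    exact Real.sqrt_le_sqrt hm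
  have hs0 : 0 ≤ s := by linarith
  set k := ⌊s⌋₊ with hkdef
  have hk1 : 1 ≤ k := Nat.le_floor (by exact_mod_cast hs1)
  have hk0 : (0:ℝ) < k := by exact_mod_cast hk1
  have hks : (k:ℝ) ≤ s := Nat.floor_le hs0
  have key : ∀ n : ℕ, m ^ ((n:ℝ)/2) = s ^ n := by
    intro n
    rw [hsdef, Real.sqrt_eq_rpow, ← Real.rpow_natCast (m ^ (1/2:ℝ)) n,
      ← Real.rpow_mul hm0]
    ring_nf
  refine ⟨fun n => by rw [key n, key k]; exact pow_div_factorial_le s hs0 n, ?_, ?_⟩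
  · rw [key k]
    have hfac : (0:ℝ) < k.factorial := by exact_mod_cast k.factorial_pos
    have hsqk : (0:ℝ) < Real.sqrt k := Real.sqrt_pos.mpr hk0
    rw [div_lt_div_iff₀ hfac hsqk]
    -- s^k * √k < exp s * k!
    have hsk : s ^ k ≤ (k:ℝ)^k * Real.exp (s - k) := by
      have h1 : s ≤ (k:ℝ) * Real.exp ((s - k)/k) := by
        have h2 := Real.add_one_le_exp ((s - k)/k)
        have h3 : (s - k)/k + 1 = s/k := by field_simp; ring
        rw [h3] at h2
        rw [div_le_iff₀ hk0] at h2
        linarith [h2]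
      calc s ^ k ≤ ((k:ℝ) * Real.exp ((s-k)/k)) ^ k := pow_le_pow_left₀ hs0 h1 k
        _ = (k:ℝ)^k * Real.exp (s - k) := by
            rw [mul_pow, ← Real.exp_nat_mul, mul_div_cancel₀]
            exact ne_of_gt hk0
    have hone : (1:ℝ) < Real.sqrt π * Real.sqrt 2 := by
      have h2 : (1:ℝ) < Real.sqrt 2 := by
        nlinarith [Real.sq_sqrt (by norm_num : (0:ℝ) ≤ 2), Real.sqrt_nonneg 2]
      have hπ : (1:ℝ) ≤ Real.sqrt π := by
        rw [show (1:ℝ) = Real.sqrt 1 by simp]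
        exact Real.sqrt_le_sqrt (by linarith [Real.pi_gt_three])
      nlinarith
    have hpos : (0:ℝ) < (k:ℝ)^k * Real.exp (s - k) * Real.sqrt k := by positivity
    calc s^k * Real.sqrt k ≤ (k:ℝ)^k * Real.exp (s - k) * Real.sqrt k :=
          mul_le_mul_of_nonneg_right hsk (Real.sqrt_nonneg _)
      _ < (Real.sqrt π * Real.sqrt 2) * ((k:ℝ)^k * Real.exp (s - k) * Real.sqrt k) := by
          nlinarith
      _ = Real.exp s * (Real.sqrt π * (Real.sqrt (2*k) * ((k:ℝ)/Real.exp 1)^k)) := by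
          rw [Real.sqrt_mul (by norm_num : (0:ℝ) ≤ 2), div_pow, Real.exp_one_pow,
            Real.exp_sub]
          field_simp
      _ ≤ Real.exp s * k.factorial :=
          mul_le_mul_of_nonneg_left (stirling_lb k) (Real.exp_nonneg s)
  · have h1 : (1:ℝ) ≤ Real.sqrt k := by
      rw [show (1:ℝ) = Real.sqrt 1 by simp]
      exact Real.sqrt_le_sqrt (by exact_mod_cast hk1)
    exact div_le_self (Real.exp_nonneg s) h1
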